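/- For every integer n ≥ 3 and every complex number z with |z| ≤ 1/n, we have 2(1−(n−1)z)(1+z+z²+z³) + n(n−1)z⁴ ≠ 0. -/

import Mathlib

/-- For every integer `n ≥ 3` and every complex `z` with `|z| ≤ 1/n`, the denominator
`2(1−(n−1)z)(1+z+z²+z³) + n(n−1)z⁴` of the Poincaré series of the Coxeter group whose
diagram is the complete graph on `n` vertices with all edges labeled `4` does not vanish. -/
theorem poincare_denominator_ne_zero_on_disc
    (n : ℕ) (hn : 3 ≤ n) (z : ℂ) (hz : ‖z‖ ≤ 1 / n) :
    2 * (1 - ((n : ℂ) - 1) * z) * (1 + z + z ^ 2 + z ^ 3)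
      + (n : ℂ) * ((n : ℂ) - 1) * z ^ 4 ≠ 0 := by
  intro h
  have hN : (3:ℝ) ≤ (n:ℝ) := by exact_mod_cast hn
  have hN0 : (0:ℝ) < n := by linarith
  set N : ℝ := (n:ℝ) with hNdef
  set a : ℝ := ‖z‖ with hadef
  have ha0 : 0 ≤ a := norm_nonneg z
  have ha : a ≤ 1 / N := hz
  have ha3 : a ≤ 1 / 3 := le_trans ha (by
    rw [div_le_div_iff₀ hN0 (by norm_num)]; linarith)
  have key : ∀ w : ℂ, 1 - ‖w‖ ≤ ‖1 + w‖ := by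
    intro w
    have h1 := norm_add_le (1 + w) (-w)
    simp only [add_neg_cancel_right, norm_neg] at h1
    simp only [norm_one] at h1
    linarith
  -- lower bound on A
  have habsm : ‖((n:ℂ) - 1) * z‖ = (N - 1) * a := by
    rw [norm_mul]
    congr 1
    have : ((n:ℂ) - 1) = ((N - 1 : ℝ) : ℂ) := by rw [hNdef]; push_cast; ring
    rw [this, Complex.norm_real, Real.norm_of_nonneg (by linarith)]
  have hA : 1 / N ≤ ‖1 - ((n:ℂ) - 1) * z‖ := by
    have h1 : 1 - (N - 1) * a ≤ ‖1 + -(((n:ℂ) - 1) * z)‖ := by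
      have := key (-(((n:ℂ) - 1) * z))
      rwa [norm_neg, habsm] at this
    have h2 : (N - 1) * a ≤ (N - 1) / N := by
      rw [div_eq_mul_inv]
      exact mul_le_mul_of_nonneg_left (by rwa [one_div] at ha) (by linarith)
    have h3 : 1 - (N - 1) / N = 1 / N := by field_simp; ring
    have h4 : (1 + -(((n:ℂ) - 1) * z)) = 1 - ((n:ℂ) - 1) * z := by ring
    rw [h4] at h1
    linarith
  -- lower bound on B
  have hB : (14:ℝ)/27 ≤ ‖1 + z + z ^ 2 + z ^ 3‖ := by
    have h1 : 1 - ‖z + z^2 + z^3‖ ≤ ‖1 + (z + z^2 + z^3)‖ := key _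
    have h2 : ‖z + z^2 + z^3‖ ≤ a + a^2 + a^3 := by
      calc ‖z + z^2 + z^3‖ ≤ ‖z + z^2‖ + ‖z^3‖ :=
            norm_add_le _ _
        _ ≤ ‖z‖ + ‖z^2‖ + ‖z^3‖ := by
            linarith [norm_add_le z (z^2)]
        _ = a + a^2 + a^3 := by rw [norm_pow, norm_pow]
    have h3 : a + a^2 + a^3 ≤ 1/3 + (1/3)^2 + (1/3)^3 := by
      have := pow_le_pow_left₀ ha0 ha3 2
      have := pow_le_pow_left₀ ha0 ha3 3
      linarith
    have h4 : (1 + (z + z^2 + z^3)) = 1 + z + z^2 + z^3 := by ring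
    rw [h4] at h1
    norm_num at h3
    linarith
  -- the equation
  have heq : ‖2 * (1 - ((n : ℂ) - 1) * z) * (1 + z + z ^ 2 + z ^ 3)‖
      = N * (N - 1) * a ^ 4 := by
    have h5 : 2 * (1 - ((n : ℂ) - 1) * z) * (1 + z + z ^ 2 + z ^ 3)
        = -((n : ℂ) * ((n : ℂ) - 1) * z ^ 4) := by linear_combination h
    rw [h5, norm_neg, norm_mul, norm_mul, norm_pow]
    congr 2
    · exact Complex.norm_natCast n
    · have : ((n:ℂ) - 1) = ((N - 1 : ℝ) : ℂ) := by rw [hNdef]; push_cast; ring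
      rw [this, Complex.norm_real, Real.norm_of_nonneg (by linarith)]
  rw [norm_mul, norm_mul] at heq
  simp only [Complex.norm_two] at heq
  -- a^4 bound
  have ha4 : a ^ 4 ≤ (1/N) ^ 4 := pow_le_pow_left₀ ha0 ha 4
  set A := ‖1 - ((n:ℂ) - 1) * z‖
  set B := ‖1 + z + z ^ 2 + z ^ 3‖
  have hA0 : 0 < A := lt_of_lt_of_le (by positivity) hA
  have hB0 : 0 < B := lt_of_lt_of_le (by norm_num) hB
  have hlow : 2 * ((1/N) * (14/27)) ≤ 2 * (A * B) := by
    have := mul_le_mul hA hB (by norm_num) (le_of_lt hA0)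
    linarith
  have hup : N * (N - 1) * a ^ 4 ≤ N * (N - 1) * (1/N)^4 := by
    apply mul_le_mul_of_nonneg_left ha4
    nlinarith
  have hfin : N * (N - 1) * (1/N)^4 < 2 * ((1/N) * (14/27)) := by
    rw [div_pow, one_pow]
    have e1 : N * (N - 1) * (1/N^4) = (N-1)/N^3 := by field_simp
    have e2 : 2 * ((1:ℝ)/N*(14/27)) = 28/(27*N) := by ring
    rw [e1, e2, div_lt_div_iff₀ (by positivity) (by positivity)]
    nlinarith [sq_nonneg N]
  nlinarith [heq]
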